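/- Let c_1, c_2 ≥ 1 and let v be the outer commutator word [[…[x_1,x_2],…,x_{c_1+1}], […[y_1,y_2],…,y_{c_2+1}]] in c_1+c_2+2 distinct variables defining the variety [𝔑_{c_1},𝔑_{c_2}]. Then for any group G with free presentation G ≅ F/R (F a free group, R a normal subgroup), the Baer invariant of G with respect to [𝔑_{c_1},𝔑_{c_2}] satisfies [𝔑_{c_1},𝔑_{c_2}]M(G) = (R ∩ v(F))/[R v* F] ≅ (R ∩ [γ_{c_1+1}(F), γ_{c_2+1}(F)]) / ([R, _{c_1}F, γ_{c_2+1}(F)]·[R, _{c_2}F, γ_{c_1+1}(F)]). -/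

import Mathlib

namespace PaperFormal

open Subgroup

open scoped commutatorElement

/-- The set of values of the words in `V` in the group `G`. -/
def wordValues {α : Type*} (V : Set (FreeGroup α)) (G : Type*) [Group G] : Set G :=
  {g | ∃ v ∈ V, ∃ f : α → G, FreeGroup.lift f v = g}

/-- The verbal subgroup `V(G)` of `G` with respect to a set of words `V`. -/
def verbal {α : Type*} (V : Set (FreeGroup α)) (G : Type*) [Group G] : Subgroup G :=
  Subgroup.closure (wordValues V G)

/-- The marginal set `V*(G)`: the set of `g ∈ G` such that replacing any single entry
`gᵢ` by `gᵢ * g` does not change the value of any word `v ∈ V`. -/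
def marginalSet {α : Type*} [DecidableEq α] (V : Set (FreeGroup α)) (G : Type*) [Group G] :
    Set G :=
  {g | ∀ v ∈ V, ∀ f : α → G, ∀ i : α,
    FreeGroup.lift (Function.update f i (f i * g)) v = FreeGroup.lift f v}

/-- The subgroup `[K V* G]`. -/
def KVstar {α : Type*} [DecidableEq α] (V : Set (FreeGroup α)) {G : Type*} [Group G]
    (K : Subgroup G) : Subgroup G :=
  Subgroup.closure {x | ∃ v ∈ V, ∃ f : α → G, ∃ i : α, ∃ r ∈ K,
    x = FreeGroup.lift (Function.update f i (f i * r)) v * (FreeGroup.lift f v)⁻¹}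

/-- The quotient group `A/B`, for subgroups `A B` of an ambient group (mathematically
meaningful when `B` is a subgroup of `A` normalized by `A`; we take the normal closure of
`B ∩ A` inside `A`, which equals `B` in that case). -/
abbrev quotBy {G : Type*} [Group G] (A B : Subgroup G) : Type _ :=
  ↥A ⧸ Subgroup.normalClosure ((B.subgroupOf A : Subgroup ↥A) : Set ↥A)

/-- The canonical projection onto `quotBy A B`. -/
def quotByMk {G : Type*} [Group G] {A : Subgroup G} (B : Subgroup G) (a : ↥A) :
    quotBy A B := QuotientGroup.mk a

/-- The natural homomorphism `A/B → A'/B'` when `A ≤ A'` and `B ≤ B'`. -/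
def quotByHom {G : Type*} [Group G] {A A' B B' : Subgroup G} (hA : A ≤ A') (hB : B ≤ B') :
    quotBy A B →* quotBy A' B' :=
  QuotientGroup.lift _ ((QuotientGroup.mk' _).comp (Subgroup.inclusion hA)) (by
    intro x hx
    have : x ∈ ((QuotientGroup.mk' (Subgroup.normalClosure
        ((B'.subgroupOf A' : Subgroup ↥A') : Set ↥A'))).comp (Subgroup.inclusion hA)).ker := by
      refine Subgroup.normalClosure_le_normal ?_ hx
      intro y hy
      simp only [SetLike.mem_coe, Subgroup.mem_subgroupOf] at hy
      simp only [SetLike.mem_coe, MonoidHom.mem_ker, MonoidHom.comp_apply,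
        QuotientGroup.mk'_apply]
      rw [QuotientGroup.eq_one_iff]
      refine Subgroup.subset_normalClosure ?_
      simp only [SetLike.mem_coe, Subgroup.mem_subgroupOf, Subgroup.coe_inclusion]
      exact hB hy
    exact this)

/-- The Baer invariant `𝔙M(G) = (R ∩ V(F))/[R V* F]` of `G ≅ F/R` with respect to the
set of words `V`. -/
abbrev BaerInv {α : Type*} [DecidableEq α] (V : Set (FreeGroup α)) {F : Type*} [Group F]
    (R : Subgroup F) : Type _ :=
  quotBy (R ⊓ verbal V F) (KVstar V R)

/-- The natural homomorphism `𝔙M(F/R) → 𝔙M(F/S)` for `R ≤ S`. -/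
def baerMap {α : Type*} [DecidableEq α] (V : Set (FreeGroup α)) {F : Type*} [Group F]
    {R S : Subgroup F} (h : R ≤ S) : BaerInv V R →* BaerInv V S :=
  quotByHom (inf_le_inf_right _ h) (Subgroup.closure_mono (by
    rintro x ⟨v, hv, f, i, r, hr, rfl⟩
    exact ⟨v, hv, f, i, r, h hr, rfl⟩))

/-- A group `G` is `V`-capable if `G ≅ E/V*(E)` for some group `E`; equivalently there
is a surjection `E → G` whose kernel is exactly the marginal subgroup `V*(E)`. -/
def VCapable {α : Type*} [DecidableEq α] (V : Set (FreeGroup α)) (G : Type*) [Group G] : Prop :=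
  ∃ (E : Type*) (_ : Group E) (φ : E →* G),
    Function.Surjective φ ∧ (φ.ker : Set E) = marginalSet V E

/-- A group `G` is capable if `G ≅ E/Z(E)` for some group `E`. -/
def Capable (G : Type*) [Group G] : Prop :=
  ∃ (E : Type*) (_ : Group E) (φ : E →* G),
    Function.Surjective φ ∧ φ.ker = Subgroup.center E

/-- A group `G` is `𝔑_c`-capable if `G ≅ E/Z_c(E)` for some group `E`. -/
def NCapable (c : ℕ) (G : Type*) [Group G] : Prop :=
  ∃ (E : Type*) (_ : Group E) (φ : E →* G),
    Function.Surjective φ ∧ φ.ker = Subgroup.upperCentralSeries E c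

/-- The nilpotency word `[…[[x₀,x₁],x₂],…,x_c]` defining the variety `𝔑_c`. -/
def nilpWord : ℕ → FreeGroup ℕ
  | 0 => FreeGroup.of 0
  | c + 1 => ⁅nilpWord c, FreeGroup.of (c + 1)⁆

/-- The outer commutator word `[[…[x₁,x₂],…,x_{c₁+1}], […[y₁,y₂],…,y_{c₂+1}]]`
(in `c₁+c₂+2` distinct variables) defining the variety `[𝔑_{c₁},𝔑_{c₂}]`. -/
def outerWord (c₁ c₂ : ℕ) : FreeGroup ℕ :=
  ⁅nilpWord c₁, FreeGroup.map (fun i => i + (c₁ + 1)) (nilpWord c₂)⁆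

/-- The solvability word `δ_ℓ` (on `2^ℓ` distinct variables) defining the variety `𝔖_ℓ`. -/
def deltaWord : ℕ → FreeGroup ℕ
  | 0 => FreeGroup.of 0
  | ℓ + 1 => ⁅deltaWord ℓ, FreeGroup.map (fun i => i + 2 ^ ℓ) (deltaWord ℓ)⁆

/-- `[R, F, F, …, F]` with `c` occurrences of `F`. -/
def iterBracket {G : Type*} [Group G] (R : Subgroup G) : ℕ → Subgroup G
  | 0 => R
  | c + 1 => ⁅iterBracket R c, (⊤ : Subgroup G)⁆

/-- Formal commutators on a set `X` of generators. -/
inductive FC (X : Type*) : Type _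
  | of : X → FC X
  | comm : FC X → FC X → FC X

namespace FC

/-- The weight of a formal commutator. -/
def wt {X : Type*} : FC X → ℕ
  | .of _ => 1
  | .comm a b => wt a + wt b

/-- The value of a formal commutator in the free group on `X`. -/
def val {X : Type*} : FC X → FreeGroup X
  | .of x => FreeGroup.of x
  | .comm a b => ⁅val a, val b⁆

/-- Whether the generator `x` occurs in a formal commutator. -/
def occurs {X : Type*} (x : X) : FC X → Prop
  | .of y => x = y
  | .comm a b => occurs x a ∨ occurs x b

/-- The standard ordering of (basic) commutators: first by weight, commutators of the
same weight being compared lexicographically in their two components. -/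
def cmp {X : Type*} [LinearOrder X] : FC X → FC X → Ordering
  | .of x, .of y => compare x y
  | .of x, .comm a b => (compare (wt (FC.of x)) (wt (FC.comm a b))).then .lt
  | .comm a b, .of y => (compare (wt (FC.comm a b)) (wt (FC.of y))).then .gt
  | .comm a b, .comm c d =>
      (compare (wt (FC.comm a b)) (wt (FC.comm c d))).then ((cmp a c).then (cmp b d))

/-- Basic commutators on a totally ordered set `X`: elements of `X` are basic of weight
one; `[cᵢ,cⱼ]` is basic provided `cᵢ, cⱼ` are basic, `cᵢ > cⱼ`, and if `cᵢ = [c_s,c_t]`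
then `cⱼ ≥ c_t`. -/
inductive IsBasic {X : Type*} [LinearOrder X] : FC X → Prop
  | of (x : X) : IsBasic (.of x)
  | comm {ci cj : FC X} : IsBasic ci → IsBasic cj → cmp cj ci = .lt →
      (∀ cs ct : FC X, ci = .comm cs ct → cmp cj ct ≠ .lt) → IsBasic (.comm ci cj)

end FC

/-- `Q` is a free abelian group with basis the subset `s ⊆ Q`. -/
def IsFreeAbelianWithBasis (Q : Type*) [Group Q] (s : Set Q) : Prop :=
  ∃ e : Q ≃* Multiplicative (FreeAbelianGroup s),
    ∀ (q : Q) (h : q ∈ s), e q = Multiplicative.ofAdd (FreeAbelianGroup.of (⟨q, h⟩ : s))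

/-- The Witt function `χ_n(d) = (1/n) ∑_{m ∣ n} μ(m) d^{n/m}`. -/
def chi (n d : ℕ) : ℕ :=
  ((∑ m ∈ n.divisors, (ArithmeticFunction.moebius m) * (d : ℤ) ^ (n / m)) / (n : ℤ)).toNat


section Aux
variable {G : Type*} [Group G]

lemma comm_mul_left (a b c : G) : ⁅a*b,c⁆ = a * ⁅b,c⁆ * a⁻¹ * ⁅a,c⁆ := by
  simp only [commutatorElement_def]; group

lemma comm_inv_left (a c : G) : ⁅a⁻¹,c⁆ = a⁻¹ * ⁅a,c⁆⁻¹ * a := by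
  simp only [commutatorElement_def]; group

lemma comm_mul_right (a b c : G) : ⁅a,b*c⁆ = ⁅a,b⁆ * (b * ⁅a,c⁆ * b⁻¹) := by
  simp only [commutatorElement_def]; group

lemma comm_inv_right (a b : G) : ⁅a,b⁻¹⁆ = b⁻¹ * ⁅a,b⁆⁻¹ * b := by
  simp only [commutatorElement_def]; group

lemma key1 (a' a b : G) : ⁅a',b⁆ * ⁅a,b⁆⁻¹ = ⁅a'*a⁻¹, a*b*a⁻¹⁆ := by
  simp only [commutatorElement_def]; group

lemma key2 (a b b' : G) : ⁅a,b'⁆ * ⁅a,b⁆⁻¹ = a * ⁅b'*b⁻¹, b*a⁻¹*b⁻¹⁆ * a⁻¹ := by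
  simp only [commutatorElement_def]; group

lemma key3 (a g r : G) : ⁅a, g*r⁆ * ⁅a,g⁆⁻¹ = (a*g) * ⁅r, a⁻¹⁆ * (a*g)⁻¹ := by
  simp only [commutatorElement_def]; group

/-- A set closed under conjugation. -/
def ConjClosed (S : Set G) : Prop := ∀ g : G, ∀ s ∈ S, g * s * g⁻¹ ∈ S

lemma ConjClosed.normal_closure' {S : Set G} (h : ConjClosed S) : (closure S).Normal := by
  constructor
  intro n hn g
  induction hn using closure_induction with
  | mem x hx => exact subset_closure (h g x hx)
  | one => simpa using one_mem _
  | mul x y _ _ hx hy =>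
      have : g * (x * y) * g⁻¹ = (g * x * g⁻¹) * (g * y * g⁻¹) := by group
      rw [this]; exact mul_mem hx hy
  | inv x _ hx =>
      have : g * x⁻¹ * g⁻¹ = (g * x * g⁻¹)⁻¹ := by group
      rw [this]; exact inv_mem hx

lemma commMem_left {N : Subgroup G} [hN : N.Normal] {S : Set G} {B : Subgroup G}
    (h : ∀ s ∈ S, ∀ b ∈ B, ⁅s,b⁆ ∈ N) :
    ∀ a ∈ closure S, ∀ b ∈ B, ⁅a,b⁆ ∈ N := by
  intro a ha
  induction ha using closure_induction with
  | mem x hx => exact h x hx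
  | one => intro b _; simpa using one_mem _
  | mul x y _ _ hx hy =>
      intro b hb
      rw [comm_mul_left]
      exact mul_mem (hN.conj_mem _ (hy b hb) x) (hx b hb)
  | inv x _ hx =>
      intro b hb
      rw [comm_inv_left]
      have := hN.conj_mem _ (inv_mem (hx b hb)) x⁻¹
      simpa [mul_assoc] using this

lemma commMem_right {N : Subgroup G} [hN : N.Normal] {s : G} {T : Set G}
    (h : ∀ t ∈ T, ⁅s,t⁆ ∈ N) : ∀ b ∈ closure T, ⁅s,b⁆ ∈ N := by
  intro b hb
  induction hb using closure_induction with
  | mem t ht => exact h t ht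
  | one => simpa using one_mem _
  | mul x y _ _ hx hy =>
      have : ⁅s,x*y⁆ = ⁅s,x⁆ * (x * ⁅s,y⁆ * x⁻¹) := by
        simp only [commutatorElement_def]; group
      rw [this]; exact mul_mem hx (hN.conj_mem _ hy x)
  | inv x _ hx =>
      have : ⁅s,x⁻¹⁆ = x⁻¹ * ⁅s,x⁆⁻¹ * x := by
        simp only [commutatorElement_def]; group
      rw [this]
      simpa using hN.conj_mem _ (inv_mem hx) x⁻¹

lemma commMem₂ {N : Subgroup G} [N.Normal] {S T : Set G}
    (h : ∀ s ∈ S, ∀ t ∈ T, ⁅s,t⁆ ∈ N) :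
    ∀ a ∈ closure S, ∀ b ∈ closure T, ⁅a,b⁆ ∈ N := by
  have h' : ∀ s ∈ S, ∀ b ∈ closure T, ⁅s,b⁆ ∈ N := fun s hs => commMem_right (h s hs)
  intro a ha b hb
  induction ha using closure_induction with
  | mem s hs => exact h' s hs b hb
  | one => simpa using one_mem _
  | mul x y _ _ hx hy =>
      rw [comm_mul_left]
      exact mul_mem (‹N.Normal›.conj_mem _ hy x) hx
  | inv x _ hx =>
      have : ⁅x⁻¹,b⁆ = x⁻¹ * ⁅x,b⁆⁻¹ * x := by
        simp only [commutatorElement_def]; group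
      rw [this]
      simpa using ‹N.Normal›.conj_mem _ (inv_mem hx) x⁻¹

lemma closure_commutator_closure {S T : Set G} (hS : ConjClosed S) (hT : ConjClosed T) :
    ⁅closure S, closure T⁆ = closure {x | ∃ s ∈ S, ∃ t ∈ T, ⁅s,t⁆ = x} := by
  haveI : (closure {x | ∃ s ∈ S, ∃ t ∈ T, ⁅s,t⁆ = x}).Normal := by
    apply ConjClosed.normal_closure'
    rintro g x ⟨s, hs, t, ht, rfl⟩
    exact ⟨g*s*g⁻¹, hS g s hs, g*t*g⁻¹, hT g t ht,
      (conjugate_commutatorElement s t g).symm⟩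
  refine le_antisymm (commutator_le.mpr ?_) (closure_le _ |>.mpr ?_)
  · exact commMem₂ (fun s hs t ht => subset_closure ⟨s, hs, t, ht, rfl⟩)
  · rintro x ⟨s, hs, t, ht, rfl⟩
    exact commutator_mem_commutator (subset_closure hs) (subset_closure ht)

lemma three_subgroups {A B C N : Subgroup G} [hN : N.Normal]
    (h1 : ⁅⁅B,C⁆,A⁆ ≤ N) (h2 : ⁅⁅C,A⁆,B⁆ ≤ N) : ⁅⁅A,B⁆,C⁆ ≤ N := by
  rw [commutator_le]
  rw [commutator_def A B]
  refine commMem_left ?_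
  rintro u ⟨x, hx, y, hy, rfl⟩ z hz
  have key : ⁅⁅x,y⁆,z⁆ =
      ((x*z) * ⁅y,⁅z⁻¹,x⁻¹⁆⁆⁻¹ * (x*z)⁻¹ * ((x*y) * ⁅x⁻¹,⁅y⁻¹,z⁆⁆⁻¹ * (x*y)⁻¹))⁻¹ := by
    simp only [commutatorElement_def]; group
  rw [key]
  have m1 : ⁅y,⁅z⁻¹,x⁻¹⁆⁆⁻¹ ∈ N := by
    have : ⁅⁅z⁻¹,x⁻¹⁆,y⁆ ∈ N :=
      h2 (commutator_mem_commutator (commutator_mem_commutator (inv_mem hz) (inv_mem hx)) hy)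
    simpa using this
  have m2 : ⁅x⁻¹,⁅y⁻¹,z⁆⁆⁻¹ ∈ N := by
    have : ⁅⁅y⁻¹,z⁆,x⁻¹⁆ ∈ N :=
      h1 (commutator_mem_commutator (commutator_mem_commutator (inv_mem hy) hz) (inv_mem hx))
    simpa using this
  exact inv_mem (mul_mem (hN.conj_mem _ m1 _) (hN.conj_mem _ m2 _))

lemma lift_conj (f : α → G) (g : G) (x : FreeGroup α) :
    FreeGroup.lift (fun j => g * f j * g⁻¹) x = g * FreeGroup.lift f x * g⁻¹ := by
  have : FreeGroup.lift (fun j => g * f j * g⁻¹) =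
      (MulAut.conj g).toMonoidHom.comp (FreeGroup.lift f) := by
    ext a
    simp [MulAut.conj]
  rw [this]
  simp [MulAut.conj]


lemma lift_map' (σ : α → β) (f : β → G) (x : FreeGroup α) :
    FreeGroup.lift f (FreeGroup.map σ x) = FreeGroup.lift (f ∘ σ) x := by
  have : (FreeGroup.lift f).comp (FreeGroup.map σ) = FreeGroup.lift (f ∘ σ) := by
    ext a
    simp
  exact congrFun (congrArg DFunLike.coe this) x


lemma lift_nilp_succ (f : ℕ → G) (c : ℕ) :
    FreeGroup.lift f (nilpWord (c+1)) = ⁅FreeGroup.lift f (nilpWord c), f (c+1)⁆ := by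
  simp [nilpWord, map_commutatorElement]


lemma nilp_agree {f g : ℕ → G} (c : ℕ) (h : ∀ j ≤ c, f j = g j) :
    FreeGroup.lift f (nilpWord c) = FreeGroup.lift g (nilpWord c) := by
  induction c with
  | zero => simpa [nilpWord] using h 0 le_rfl
  | succ c ih =>
      rw [lift_nilp_succ, lift_nilp_succ,
        ih (fun j hj => h j (hj.trans (Nat.le_succ c))), h (c+1) le_rfl]


lemma lift_outer (c₁ c₂ : ℕ) (f : ℕ → G) :
    FreeGroup.lift f (outerWord c₁ c₂) =
      ⁅FreeGroup.lift f (nilpWord c₁),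
       FreeGroup.lift (fun j => f (j + (c₁+1))) (nilpWord c₂)⁆ := by
  rw [outerWord, map_commutatorElement, lift_map']
  rfl


lemma wordValues_conjClosed (V : Set (FreeGroup α)) : ConjClosed (wordValues V G) := by
  rintro g s ⟨v, hv, f, rfl⟩
  exact ⟨v, hv, fun j => g * f j * g⁻¹, lift_conj f g v⟩

lemma wordValues_nilp_zero : wordValues {nilpWord 0} G = Set.univ := by
  ext g
  simp only [Set.mem_univ, iff_true, wordValues, Set.mem_setOf_eq]
  exact ⟨nilpWord 0, rfl, fun _ => g, by simp [nilpWord]⟩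

lemma mem_nilpVal_succ {c : ℕ} {x : G} :
    x ∈ wordValues {nilpWord (c+1)} G ↔
      ∃ s ∈ wordValues {nilpWord c} G, ∃ g : G, ⁅s,g⁆ = x := by
  constructor
  · rintro ⟨v, rfl, f, rfl⟩
    exact ⟨FreeGroup.lift f (nilpWord c), ⟨nilpWord c, rfl, f, rfl⟩, f (c+1),
      (lift_nilp_succ f c).symm⟩
  · rintro ⟨s, ⟨v, rfl, f, rfl⟩, g, rfl⟩
    refine ⟨nilpWord (c+1), rfl, Function.update f (c+1) g, ?_⟩
    rw [lift_nilp_succ]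
    rw [nilp_agree c (f := Function.update f (c+1) g) (g := f)
      (fun j hj => Function.update_of_ne (by omega) _ _)]
    rw [Function.update_self]

lemma nilpVal_inv {c : ℕ} {x : G} (hx : x ∈ wordValues {nilpWord c} G) :
    x⁻¹ ∈ wordValues {nilpWord c} G := by
  induction c generalizing x with
  | zero => rw [wordValues_nilp_zero]; trivial
  | succ c ih =>
      rcases mem_nilpVal_succ.mp hx with ⟨s, hs, g, rfl⟩
      have h1 : ⁅s⁻¹, g⁆ ∈ wordValues {nilpWord (c+1)} G :=
        mem_nilpVal_succ.mpr ⟨s⁻¹, ih hs, g, rfl⟩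
      have h2 := wordValues_conjClosed (G := G) {nilpWord (c+1)} s _ h1
      have : s * ⁅s⁻¹, g⁆ * s⁻¹ = ⁅s,g⁆⁻¹ := by
        simp only [commutatorElement_def]; group
      rwa [this] at h2

lemma lcs_eq_closure (c : ℕ) :
    (⊤ : Subgroup G).lowerCentralSeries c = closure (wordValues {nilpWord c} G) := by
  induction c with
  | zero =>
      rw [Subgroup.lowerCentralSeries_zero, wordValues_nilp_zero]
      exact (Subgroup.closure_univ).symm
  | succ c ih =>
      rw [show (⊤ : Subgroup G).lowerCentralSeries (c+1) = ⁅(⊤ : Subgroup G).lowerCentralSeries c, (⊤ : Subgroup G)⁆ from rfl,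
        ih, ← Subgroup.closure_univ (G := G),
        closure_commutator_closure (wordValues_conjClosed _)
          (fun g s _ => Set.mem_univ _)]
      congr 1
      ext x
      constructor
      · rintro ⟨s, hs, t, -, rfl⟩
        exact mem_nilpVal_succ.mpr ⟨s, hs, t, rfl⟩
      · intro hx
        rcases mem_nilpVal_succ.mp hx with ⟨s, hs, g, rfl⟩
        exact ⟨s, hs, g, Set.mem_univ _, rfl⟩

lemma iterBracket_succ (R : Subgroup G) (c : ℕ) :
    iterBracket R (c+1) = ⁅iterBracket R c, (⊤ : Subgroup G)⁆ := rfl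

lemma iterBracket_normal (R : Subgroup G) [hR : R.Normal] (c : ℕ) :
    (iterBracket R c).Normal := by
  induction c with
  | zero => exact hR
  | succ c ih => rw [iterBracket_succ]; exact @Subgroup.commutator_normal _ _ _ _ ih inferInstance

lemma iterBracket_shift (R : Subgroup G) (c : ℕ) :
    iterBracket (⁅R, (⊤ : Subgroup G)⁆) c = iterBracket R (c+1) := by
  induction c with
  | zero => rfl
  | succ c ih => rw [iterBracket_succ, ih]; rfl

lemma lemB : ∀ (c : ℕ) (R : Subgroup G) [R.Normal],
    ⁅R, (⊤ : Subgroup G).lowerCentralSeries c⁆ ≤ iterBracket R (c+1) := by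
  intro c
  induction c with
  | zero =>
      intro R hR
      rw [Subgroup.lowerCentralSeries_zero]
      exact le_of_eq rfl
  | succ c ih =>
      intro R hR
      haveI hN : (iterBracket R (c+2)).Normal := iterBracket_normal R (c+2)
      rw [commutator_comm, show (⊤ : Subgroup G).lowerCentralSeries (c+1) = ⁅(⊤ : Subgroup G).lowerCentralSeries c, (⊤ : Subgroup G)⁆ from rfl]
      refine three_subgroups ?_ ?_
      · -- ⁅⁅⊤, R⁆, (⊤ : Subgroup G).lowerCentralSeries c⁆ ≤ iterBracket R (c+2)
        rw [commutator_comm (⊤ : Subgroup G) R]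
        haveI : (⁅R, (⊤ : Subgroup G)⁆).Normal := iterBracket_normal R 1
        calc ⁅⁅R, (⊤ : Subgroup G)⁆, (⊤ : Subgroup G).lowerCentralSeries c⁆
            ≤ iterBracket (⁅R, (⊤ : Subgroup G)⁆) (c+1) := ih _
          _ = iterBracket R (c+2) := iterBracket_shift R (c+1)
      · -- ⁅⁅R, lcs c⁆, ⊤⁆ ≤
        calc ⁅⁅R, (⊤ : Subgroup G).lowerCentralSeries c⁆, (⊤ : Subgroup G)⁆
            ≤ ⁅iterBracket R (c+1), (⊤ : Subgroup G)⁆ := commutator_mono (ih R) le_rfl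
          _ = iterBracket R (c+2) := rfl

lemma wordValues_subset_lcs (c : ℕ) :
    wordValues {nilpWord c} G ⊆ ((⊤ : Subgroup G).lowerCentralSeries c : Set G) := by
  rw [lcs_eq_closure]; exact subset_closure

lemma diffA {R : Subgroup G} [hR : R.Normal] (c : ℕ) (f : ℕ → G) (i : ℕ) {r : G}
    (hr : r ∈ R) :
    FreeGroup.lift (Function.update f i (f i * r)) (nilpWord c) *
      (FreeGroup.lift f (nilpWord c))⁻¹ ∈ iterBracket R c := by
  induction c generalizing f with
  | zero =>
      show _ ∈ R
      by_cases h : i = 0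
      · subst h
        simp only [nilpWord, FreeGroup.lift_apply_of, Function.update_self]
        have : f 0 * r * (f 0)⁻¹ ∈ R := hR.conj_mem r hr (f 0)
        simpa [mul_assoc] using this
      · have h0 : Function.update f i (f i * r) 0 = f 0 :=
          Function.update_of_ne (fun hh => h hh.symm) _ _
        simp only [nilpWord, FreeGroup.lift_apply_of, h0]
        simpa using one_mem R
  | succ c ih =>
      haveI := iterBracket_normal R (c+1)
      set f' := Function.update f i (f i * r) with hf'
      by_cases h : i = c + 1
      · -- modified slot is the last one
        subst h
        have ha : FreeGroup.lift f' (nilpWord c) = FreeGroup.lift f (nilpWord c) :=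
          nilp_agree c (fun j hj => Function.update_of_ne (by omega) _ _)
        have hg : f' (c+1) = f (c+1) * r := Function.update_self _ _ _
        rw [lift_nilp_succ, lift_nilp_succ, ha, hg, key3]
        have hm : ⁅r, (FreeGroup.lift f (nilpWord c))⁻¹⁆ ∈ iterBracket R (c+1) :=
          lemB c R (commutator_mem_commutator hr
            (inv_mem (wordValues_subset_lcs c ⟨nilpWord c, rfl, f, rfl⟩)))
        exact (iterBracket_normal R (c+1)).conj_mem _ hm _
      · have hg : f' (c+1) = f (c+1) := Function.update_of_ne (Ne.symm h) _ _
        rw [lift_nilp_succ, lift_nilp_succ, hg, key1]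
        exact commutator_mem_commutator (ih f) (mem_top _)

lemma update_conj {α : Type*} [DecidableEq α] (f : α → G) (i : α) (r g : G) :
    Function.update (fun j => g * f j * g⁻¹) i ((g * f i * g⁻¹) * (g * r * g⁻¹)) =
      fun j => g * (Function.update f i (f i * r)) j * g⁻¹ := by
  funext j
  by_cases h : j = i
  · subst h
    rw [Function.update_self, Function.update_self]
    group
  · rw [Function.update_of_ne h, Function.update_of_ne h]

lemma KVstar_normal {α : Type*} [DecidableEq α] (V : Set (FreeGroup α)) (R : Subgroup G)
    [hR : R.Normal] : (KVstar V R).Normal := by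
  apply ConjClosed.normal_closure'
  rintro g x ⟨v, hv, f, i, r, hr, rfl⟩
  refine ⟨v, hv, fun j => g * f j * g⁻¹, i, g * r * g⁻¹, hR.conj_mem r hr g, ?_⟩
  rw [update_conj, lift_conj, lift_conj]
  group

lemma KVstar_nilp (R : Subgroup G) [hR : R.Normal] :
    ∀ c : ℕ, KVstar {nilpWord c} R = iterBracket R c := by
  intro c
  induction c with
  | zero =>
      apply le_antisymm
      · refine (closure_le _).mpr ?_
        rintro x ⟨v, rfl, f, i, r, hr, rfl⟩
        exact diffA 0 f i hr
      · intro r hr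
        refine subset_closure ⟨nilpWord 0, rfl, fun _ => 1, 0, r, hr, ?_⟩
        simp [nilpWord]
  | succ c ih =>
      haveI hN : (KVstar {nilpWord (c+1)} R).Normal := KVstar_normal _ R
      apply le_antisymm
      · refine (closure_le _).mpr ?_
        rintro x ⟨v, rfl, f, i, r, hr, rfl⟩
        exact diffA (c+1) f i hr
      · show iterBracket R (c+1) ≤ _
        rw [show iterBracket R (c+1) = ⁅iterBracket R c, (⊤ : Subgroup G)⁆ from rfl,
          commutator_le, ← ih]
        refine commMem_left ?_
        rintro s ⟨v, rfl, f, i, r, hr, rfl⟩ g -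
        by_cases hi : i ≤ c
        · set a := FreeGroup.lift f (nilpWord c) with ha
          set F₀ := Function.update f (c+1) (a⁻¹ * g * a) with hF₀
          have e1 : FreeGroup.lift F₀ (nilpWord c) = a :=
            nilp_agree c (fun j hj => Function.update_of_ne (by omega) _ _)
          have e2 : F₀ (c+1) = a⁻¹ * g * a := Function.update_self _ _ _
          have e3 : F₀ i = f i := Function.update_of_ne (by omega) _ _
          have e4 : FreeGroup.lift (Function.update F₀ i (F₀ i * r)) (nilpWord c) =
              FreeGroup.lift (Function.update f i (f i * r)) (nilpWord c) := by
            apply nilp_agree c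
            intro j hj
            by_cases hji : j = i
            · subst hji; rw [Function.update_self, Function.update_self, e3]
            · rw [Function.update_of_ne hji, Function.update_of_ne hji, hF₀]
              exact Function.update_of_ne (by omega) _ _
          have e5 : (Function.update F₀ i (F₀ i * r)) (c+1) = a⁻¹ * g * a := by
            rw [Function.update_of_ne (by omega) _ _, e2]
          refine subset_closure ⟨nilpWord (c+1), rfl, F₀, i, r, hr, ?_⟩
          rw [lift_nilp_succ, lift_nilp_succ, e1, e2, e4, e5, key1]
          have : FreeGroup.lift (Function.update f i (f i * r)) (nilpWord c) * a⁻¹ =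
              FreeGroup.lift (Function.update f i (f i * r)) (nilpWord c) *
                (FreeGroup.lift f (nilpWord c))⁻¹ := rfl
          rw [this]
          congr 1
          group
        · have : FreeGroup.lift (Function.update f i (f i * r)) (nilpWord c) =
              FreeGroup.lift f (nilpWord c) :=
            nilp_agree c (fun j hj => Function.update_of_ne (by omega) _ _)
          rw [this]
          simp only [mul_inv_cancel]
          simpa using one_mem _

lemma wordValues_outer (c₁ c₂ : ℕ) :
    wordValues {outerWord c₁ c₂} G =
      {x | ∃ s ∈ wordValues {nilpWord c₁} G, ∃ t ∈ wordValues {nilpWord c₂} G, ⁅s,t⁆ = x} := by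
  ext x
  constructor
  · rintro ⟨v, rfl, f, rfl⟩
    exact ⟨FreeGroup.lift f (nilpWord c₁), ⟨nilpWord c₁, rfl, f, rfl⟩,
      FreeGroup.lift (fun j => f (j + (c₁+1))) (nilpWord c₂),
      ⟨nilpWord c₂, rfl, _, rfl⟩, (lift_outer c₁ c₂ f).symm⟩
  · rintro ⟨s, ⟨v₁, rfl, f₁, rfl⟩, t, ⟨v₂, rfl, f₂, rfl⟩, rfl⟩
    refine ⟨outerWord c₁ c₂, rfl,
      fun j => if j ≤ c₁ then f₁ j else f₂ (j - (c₁+1)), ?_⟩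
    rw [lift_outer]
    congr 1
    · exact nilp_agree c₁ (fun j hj => by simp [hj])
    · have : (fun j => if j + (c₁+1) ≤ c₁ then f₁ (j + (c₁+1))
          else f₂ (j + (c₁+1) - (c₁+1))) = f₂ := by
        funext j
        rw [if_neg (by omega)]
        congr 1
        omega
      rw [this]

lemma verbal_outer (c₁ c₂ : ℕ) :
    verbal {outerWord c₁ c₂} G =
      ⁅(⊤ : Subgroup G).lowerCentralSeries c₁, (⊤ : Subgroup G).lowerCentralSeries c₂⁆ := by
  rw [verbal, wordValues_outer, lcs_eq_closure, lcs_eq_closure,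
    closure_commutator_closure (wordValues_conjClosed _) (wordValues_conjClosed _)]

lemma KVstar_outer (c₁ c₂ : ℕ) (R : Subgroup G) [hR : R.Normal] :
    KVstar {outerWord c₁ c₂} R =
      ⁅iterBracket R c₁, (⊤ : Subgroup G).lowerCentralSeries c₂⁆ ⊔
      ⁅iterBracket R c₂, (⊤ : Subgroup G).lowerCentralSeries c₁⁆ := by
  haveI hI₁ : (iterBracket R c₁).Normal := iterBracket_normal R c₁
  haveI hI₂ : (iterBracket R c₂).Normal := iterBracket_normal R c₂
  haveI hK : (KVstar {outerWord c₁ c₂} R).Normal := KVstar_normal _ R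
  apply le_antisymm
  · refine (closure_le _).mpr ?_
    rintro x ⟨v, rfl, f, i, r, hr, rfl⟩
    set f' := Function.update f i (f i * r) with hf'
    rw [lift_outer, lift_outer]
    by_cases hi : i ≤ c₁
    · have hb : (fun j => f' (j + (c₁+1))) = (fun j => f (j + (c₁+1))) := by
        funext j
        exact Function.update_of_ne (by omega) _ _
      rw [hb, key1]
      refine SetLike.le_def.mp le_sup_left ?_
      exact commutator_mem_commutator (diffA c₁ f i hr)
        ((lowerCentralSeries_normal ⊤ c₂).conj_mem _
          (wordValues_subset_lcs c₂ ⟨nilpWord c₂, rfl, _, rfl⟩) _)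
    · set i₀ := i - (c₁ + 1) with hi₀
      have hii : i₀ + (c₁+1) = i := by omega
      have ea : FreeGroup.lift f' (nilpWord c₁) = FreeGroup.lift f (nilpWord c₁) :=
        nilp_agree c₁ (fun j hj => Function.update_of_ne (by omega) _ _)
      have eb : (fun j => f' (j + (c₁+1))) =
          Function.update (fun j => f (j + (c₁+1))) i₀ (f (i₀ + (c₁+1)) * r) := by
        funext j
        by_cases hji : j = i₀
        · subst hji
          rw [hii, hf', Function.update_self, Function.update_self]
        · rw [hf', Function.update_of_ne (by omega) _ _, Function.update_of_ne hji]
      rw [ea, eb, key2]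
      refine SetLike.le_def.mp le_sup_right ?_
      haveI : (⁅iterBracket R c₂, (⊤ : Subgroup G).lowerCentralSeries c₁⁆ : Subgroup G).Normal :=
        Subgroup.commutator_normal _ _
      refine this.conj_mem _ ?_ _
      refine commutator_mem_commutator (diffA c₂ _ i₀ hr) ?_
      exact (lowerCentralSeries_normal ⊤ c₁).conj_mem _
        (inv_mem (wordValues_subset_lcs c₁ ⟨nilpWord c₁, rfl, f, rfl⟩)) _
  · refine sup_le ?_ ?_
    · rw [← KVstar_nilp R c₁, lcs_eq_closure, commutator_le]
      intro s hs t ht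
      refine commMem₂ (N := KVstar {outerWord c₁ c₂} R) ?_ s hs t ht
      rintro s ⟨v, rfl, f, i, r, hr, rfl⟩ t ⟨v₁, rfl, h, rfl⟩
      by_cases hi : i ≤ c₁
      · set a := FreeGroup.lift f (nilpWord c₁) with ha
        set F : ℕ → G := fun j => if j ≤ c₁ then f j else a⁻¹ * h (j - (c₁+1)) * a with hF
        have eF1 : FreeGroup.lift F (nilpWord c₁) = a :=
          nilp_agree c₁ (fun j hj => by rw [hF]; simp [hj])
        have eFi : F i = f i := by rw [hF]; simp [hi]
        have eF2 : (fun j => F (j + (c₁+1))) = fun j => a⁻¹ * h j * a := by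
          funext j
          rw [hF]
          simp only
          rw [if_neg (by omega), Nat.add_sub_cancel]
        have eb₀ : FreeGroup.lift (fun j => a⁻¹ * h j * a) (nilpWord c₂) =
            a⁻¹ * FreeGroup.lift h (nilpWord c₂) * a := by
          have := lift_conj h a⁻¹ (nilpWord c₂)
          simpa [inv_inv] using this
        have eU1 : FreeGroup.lift (Function.update F i (F i * r)) (nilpWord c₁) =
            FreeGroup.lift (Function.update f i (f i * r)) (nilpWord c₁) := by
          apply nilp_agree c₁
          intro j hj
          by_cases hji : j = i
          · subst hji
            rw [Function.update_self, Function.update_self, eFi]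
          · rw [Function.update_of_ne hji, Function.update_of_ne hji, hF]
            simp [hj]
        have eU2 : (fun j => (Function.update F i (F i * r)) (j + (c₁+1))) =
            fun j => a⁻¹ * h j * a := by
          funext j
          have e' : (Function.update F i (F i * r)) (j + (c₁+1)) = F (j + (c₁+1)) :=
            Function.update_of_ne (by omega) _ _
          rw [e']
          exact congrFun eF2 j
        refine subset_closure ⟨outerWord c₁ c₂, rfl, F, i, r, hr, ?_⟩
        rw [lift_outer, lift_outer, eF1, eU1, eU2, eF2, eb₀, key1]
        congr 1
        group
      · have e : FreeGroup.lift (Function.update f i (f i * r)) (nilpWord c₁) =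
            FreeGroup.lift f (nilpWord c₁) :=
          nilp_agree c₁ (fun j hj => Function.update_of_ne (by omega) _ _)
        rw [e, mul_inv_cancel, commutatorElement_one_left]
        exact one_mem _
    · rw [← KVstar_nilp R c₂, lcs_eq_closure, commutator_le]
      intro s hs t ht
      refine commMem₂ (N := KVstar {outerWord c₁ c₂} R) ?_ s hs t ht
      rintro s ⟨v, rfl, h₂, i₀, r, hr, rfl⟩ t ⟨v₁, rfl, f₁, rfl⟩
      by_cases hi₀ : i₀ ≤ c₂
      · set t := FreeGroup.lift f₁ (nilpWord c₁) with htdef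
        set b := FreeGroup.lift h₂ (nilpWord c₂) with hb
        have ht' : t⁻¹ ∈ wordValues {nilpWord c₁} G :=
          nilpVal_inv ⟨nilpWord c₁, rfl, f₁, rfl⟩
        have ha₀ : b⁻¹ * t⁻¹ * b ∈ wordValues {nilpWord c₁} G := by
          have := wordValues_conjClosed (G := G) {nilpWord c₁} b⁻¹ _ ht'
          simpa [inv_inv] using this
        obtain ⟨v₁', hv₁', fstar, hfstar⟩ := ha₀
        rw [Set.mem_singleton_iff] at hv₁'
        subst hv₁'
        set i := i₀ + (c₁ + 1) with hidef
        set F : ℕ → G := fun j => if j ≤ c₁ then fstar j else h₂ (j - (c₁+1)) with hF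
        have eF1 : FreeGroup.lift F (nilpWord c₁) = b⁻¹ * t⁻¹ * b :=
          (nilp_agree c₁ (fun j hj => by rw [hF]; simp [hj])).trans hfstar
        have eF2 : (fun j => F (j + (c₁+1))) = h₂ := by
          funext j
          rw [hF]
          simp only
          rw [if_neg (by omega), Nat.add_sub_cancel]
        have eFi : F i = h₂ i₀ := by
          rw [hF, hidef]
          simp only
          rw [if_neg (by omega), Nat.add_sub_cancel]
        have eU1 : FreeGroup.lift (Function.update F i (F i * r)) (nilpWord c₁) =
            b⁻¹ * t⁻¹ * b := by
          refine (nilp_agree c₁ ?_).trans eF1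
          intro j hj
          exact Function.update_of_ne (by omega) _ _
        have eU2 : (fun j => (Function.update F i (F i * r)) (j + (c₁+1))) =
            Function.update h₂ i₀ (h₂ i₀ * r) := by
          funext j
          by_cases hji : j = i₀
          · subst hji
            rw [show j + (c₁+1) = i from hidef.symm, Function.update_self,
              Function.update_self, eFi]
          · have e' : (Function.update F i (F i * r)) (j + (c₁+1)) = F (j + (c₁+1)) :=
              Function.update_of_ne (by omega) _ _
            rw [e', Function.update_of_ne hji]
            exact congrFun eF2 j
        have hgen : FreeGroup.lift (Function.update F i (F i * r)) (outerWord c₁ c₂) *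
            (FreeGroup.lift F (outerWord c₁ c₂))⁻¹ ∈ KVstar {outerWord c₁ c₂} R :=
          subset_closure ⟨outerWord c₁ c₂, rfl, F, i, r, hr, rfl⟩
        have hexpr : FreeGroup.lift (Function.update F i (F i * r)) (outerWord c₁ c₂) *
            (FreeGroup.lift F (outerWord c₁ c₂))⁻¹ =
            (b⁻¹ * t⁻¹ * b) *
              ⁅FreeGroup.lift (Function.update h₂ i₀ (h₂ i₀ * r)) (nilpWord c₂) *
                (FreeGroup.lift h₂ (nilpWord c₂))⁻¹, t⁆ * (b⁻¹ * t⁻¹ * b)⁻¹ := by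
          rw [lift_outer, lift_outer, eF1, eU1, eU2, eF2, key2]
          have e : b * (b⁻¹ * t⁻¹ * b)⁻¹ * b⁻¹ = t := by group
          rw [e]
        have hmem := hK.conj_mem _ hgen (b⁻¹ * t⁻¹ * b)⁻¹
        rw [inv_inv, hexpr] at hmem
        have efin : (b⁻¹ * t⁻¹ * b)⁻¹ *
            ((b⁻¹ * t⁻¹ * b) *
              ⁅FreeGroup.lift (Function.update h₂ i₀ (h₂ i₀ * r)) (nilpWord c₂) *
                (FreeGroup.lift h₂ (nilpWord c₂))⁻¹, t⁆ * (b⁻¹ * t⁻¹ * b)⁻¹) *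
            (b⁻¹ * t⁻¹ * b) =
            ⁅FreeGroup.lift (Function.update h₂ i₀ (h₂ i₀ * r)) (nilpWord c₂) *
              (FreeGroup.lift h₂ (nilpWord c₂))⁻¹, t⁆ := by group
        rwa [efin] at hmem
      · have e : FreeGroup.lift (Function.update h₂ i₀ (h₂ i₀ * r)) (nilpWord c₂) =
            FreeGroup.lift h₂ (nilpWord c₂) :=
          nilp_agree c₂ (fun j hj => Function.update_of_ne (by omega) _ _)
        rw [e, mul_inv_cancel, commutatorElement_one_left]
        exact one_mem _


end Aux

/-- Let `c₁, c₂ ≥ 1` and let `v` be the outer commutator word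
defining `[𝔑_{c₁},𝔑_{c₂}]`. For any group `G` with free presentation `G ≅ F/R`, the
Baer invariant `(R ∩ v(F))/[R v* F]` of `G` with respect to `[𝔑_{c₁},𝔑_{c₂}]` is
isomorphic to
`(R ∩ [γ_{c₁+1}(F), γ_{c₂+1}(F)]) / ([R, _{c₁}F, γ_{c₂+1}(F)]·[R, _{c₂}F, γ_{c₁+1}(F)])`
(the product of these two normal subgroups being their join; recall `γ_{c+1}(F)` is
`lowerCentralSeries F c` in Mathlib's indexing). -/
theorem statement_19 {X : Type*} (c₁ c₂ : ℕ) (hc₁ : 1 ≤ c₁) (hc₂ : 1 ≤ c₂)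
    (R : Subgroup (FreeGroup X)) [R.Normal] :
    Nonempty (BaerInv {outerWord c₁ c₂} R ≃*
      quotBy
        (R ⊓ ⁅(⊤ : Subgroup (FreeGroup X)).lowerCentralSeries c₁, (⊤ : Subgroup (FreeGroup X)).lowerCentralSeries c₂⁆)
        (⁅iterBracket R c₁, (⊤ : Subgroup (FreeGroup X)).lowerCentralSeries c₂⁆ ⊔
         ⁅iterBracket R c₂, (⊤ : Subgroup (FreeGroup X)).lowerCentralSeries c₁⁆)) := by
  have quotBy_congr : ∀ {H : Type _} [inst : Group H] (A B A' B' : Subgroup H),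
      A = A' → B = B' → Nonempty (quotBy A B ≃* quotBy A' B') := by
    intro H _ A B A' B' hA hB
    subst hA
    subst hB
    exact ⟨MulEquiv.refl _⟩
  exact quotBy_congr _ _ _ _ (by rw [verbal_outer]) (KVstar_outer c₁ c₂ R)

end PaperFormal
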